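/- Let A be a circular DFA and p ≠ q states with gcd(d(p,q), n) = k. Then the congruence generated by (p,q) contains a pair (p₁,q₁) with d(p₁,q₁) = k. In particular, if gcd(d(p,q), n) = 1, the congruence generated by (p,q) is the universal relation's refinement making the automaton collapse, i.e., contains a pair at distance 1 and hence (by transitive closure under the cycle) equals the full relation. -/

import Mathlib

def wordAct {n : ℕ} {A : Type} (δ : Fin n → A → Fin n) (p : Fin n) (u : List A) : Fin n :=
  u.foldl δ p

noncomputable def relDist {n : ℕ} {A : Type} (δ : Fin n → A → Fin n) (a : A) (p q : Fin n) : ℕ :=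
  sInf {k : ℕ | wordAct δ p (List.replicate k a) = q ∨ wordAct δ q (List.replicate k a) = p}

/-- The cyclic successor `q ↦ q + 1 (mod n)` on `Fin n`. -/
def cyc {n : ℕ} (q : Fin n) : Fin n :=
  ⟨(q.val + 1) % n, Nat.mod_lt _ (by have := q.isLt; omega)⟩

def IsCirculating {n : ℕ} {A : Type} (δ : Fin n → A → Fin n) (a : A) : Prop :=
  ∀ q : Fin n, δ q a = cyc q

def IsContracting {n : ℕ} {A : Type} (δ : Fin n → A → Fin n) (a : A) : Prop :=
  ∀ p q : Fin n, 1 < relDist δ a p q →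
    ∃ u : List A, 1 ≤ relDist δ a (wordAct δ p u) (wordAct δ q u) ∧
      relDist δ a (wordAct δ p u) (wordAct δ q u) < relDist δ a p q

def IsWeaklyContractingPair {n : ℕ} {A : Type} (δ : Fin n → A → Fin n) (a : A) (p q : Fin n) : Prop :=
  ∀ m : ℕ, (∀ u : List A, wordAct δ p u ≠ wordAct δ q u →
      m ∣ Nat.gcd (relDist δ a (wordAct δ p u) (wordAct δ q u)) n) → m = 1

def IsWeaklyContracting {n : ℕ} {A : Type} (δ : Fin n → A → Fin n) (a : A) : Prop :=
  ∀ p q : Fin n, p ≠ q → IsWeaklyContractingPair δ a p q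

def IsCongruence {n : ℕ} {A : Type} (δ : Fin n → A → Fin n) (σ : Fin n → Fin n → Prop) : Prop :=
  Equivalence σ ∧ ∀ (p q : Fin n) (u : List A), σ p q → σ (wordAct δ p u) (wordAct δ q u)

def IsSimple {n : ℕ} {A : Type} (δ : Fin n → A → Fin n) : Prop :=
  ∀ σ : Fin n → Fin n → Prop, IsCongruence δ σ → (∀ x y, σ x y → x = y) ∨ (∀ x y, σ x y)

def IsSynchronizing {n : ℕ} {A : Type} (δ : Fin n → A → Fin n) : Prop :=
  ∃ u : List A, ∀ p q : Fin n, wordAct δ p u = wordAct δ q u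

/-- The congruence generated by the pair `(p, q)`. -/
def genCong {n : ℕ} {A : Type} (δ : Fin n → A → Fin n) (p q x y : Fin n) : Prop :=
  ∀ σ : Fin n → Fin n → Prop, IsCongruence δ σ → σ p q → σ x y

/-- shift by `m` along the cycle -/
def shf {n : ℕ} (p : Fin n) (m : ℕ) : Fin n :=
  ⟨(p.val + m) % n, Nat.mod_lt _ p.pos⟩

lemma shf_eq_of_mod {n : ℕ} (p : Fin n) {m₁ m₂ : ℕ} (h : m₁ % n = m₂ % n) :
    shf p m₁ = shf p m₂ := by
  apply Fin.ext
  show (p.val + m₁) % n = (p.val + m₂) % n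
  rw [Nat.add_mod, h, ← Nat.add_mod]

lemma shf_shf {n : ℕ} (p : Fin n) (m l : ℕ) : shf (shf p m) l = shf p (m + l) := by
  apply Fin.ext
  show ((p.val + m) % n + l) % n = (p.val + (m + l)) % n
  rw [Nat.mod_add_mod, Nat.add_assoc]

lemma shf_zero {n : ℕ} (p : Fin n) : shf p 0 = p :=
  Fin.ext (by show (p.val + 0) % n = p.val; rw [Nat.add_zero, Nat.mod_eq_of_lt p.isLt])

lemma shf_repr {n : ℕ} (p x : Fin n) : (p.val + (x.val + n - p.val) % n) % n = x.val := by
  rw [Nat.add_mod, Nat.mod_mod_of_dvd _ dvd_rfl, ← Nat.add_mod]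
  have e : p.val + (x.val + n - p.val) = x.val + n := by have := p.isLt; omega
  rw [e, Nat.add_mod_right, Nat.mod_eq_of_lt x.isLt]

lemma dist_le {n : ℕ} (p q : Fin n) {m : ℕ} (h : (p.val + m) % n = q.val) :
    (q.val + n - p.val) % n ≤ m := by
  have e1 : q.val + n - p.val = q.val + (n - p.val) := by have := p.isLt; omega
  rw [e1, ← h, Nat.mod_add_mod]
  have e3 : p.val + m + (n - p.val) = m + n := by have := p.isLt; omega
  rw [e3, Nat.add_mod_right]
  exact Nat.mod_le m n

lemma wordAct_replicate {n : ℕ} {A : Type} {δ : Fin n → A → Fin n} {a : A}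
    (ha : IsCirculating δ a) (p : Fin n) (m : ℕ) :
    wordAct δ p (List.replicate m a) = shf p m := by
  induction m generalizing p with
  | zero => exact (shf_zero p).symm
  | succ m ih =>
    rw [List.replicate_succ]
    show wordAct δ (δ p a) (List.replicate m a) = shf p (m + 1)
    rw [ha p]
    have hc : (cyc p : Fin n) = shf p 1 := rfl
    rw [hc, ih, shf_shf, Nat.add_comm]

lemma relDist_eq {n : ℕ} {A : Type} {δ : Fin n → A → Fin n} {a : A}
    (ha : IsCirculating δ a) (p q : Fin n) :
    relDist δ a p q = min ((q.val + n - p.val) % n) ((p.val + n - q.val) % n) := by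
  set d1 := (q.val + n - p.val) % n with hd1
  set d2 := (p.val + n - q.val) % n with hd2
  set S := {k : ℕ | wordAct δ p (List.replicate k a) = q ∨ wordAct δ q (List.replicate k a) = p}
    with hS
  have hm1 : d1 ∈ S := by
    left
    rw [wordAct_replicate ha]
    exact Fin.ext (shf_repr p q)
  have hm2 : d2 ∈ S := by
    right
    rw [wordAct_replicate ha]
    exact Fin.ext (shf_repr q p)
  have hlb : ∀ m ∈ S, min d1 d2 ≤ m := by
    rintro m (h | h)
    · rw [wordAct_replicate ha] at h
      exact le_trans (min_le_left _ _) (dist_le p q (congrArg Fin.val h))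
    · rw [wordAct_replicate ha] at h
      exact le_trans (min_le_right _ _) (dist_le q p (congrArg Fin.val h))
  apply le_antisymm
  · apply Nat.sInf_le
    rcases le_total d1 d2 with h | h
    · rw [min_eq_left h]; exact hm1
    · rw [min_eq_right h]; exact hm2
  · exact hlb _ (Nat.sInf_mem ⟨d1, hm1⟩)

theorem stmt6 (n : ℕ) (A : Type) (δ : Fin n → A → Fin n) (a : A)
    (ha : IsCirculating δ a) (p q : Fin n) (hpq : p ≠ q) (k : ℕ)
    (hk : Nat.gcd (relDist δ a p q) n = k) :
    (∃ p₁ q₁ : Fin n, genCong δ p q p₁ q₁ ∧ relDist δ a p₁ q₁ = k) ∧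
    (k = 1 → (∃ p₁ q₁ : Fin n, genCong δ p q p₁ q₁ ∧ relDist δ a p₁ q₁ = 1) ∧
      ∀ x y : Fin n, genCong δ p q x y) := by
  have hn : 0 < n := p.pos
  have hp := p.isLt
  have hq := q.isLt
  set d1 := (q.val + n - p.val) % n with hd1def
  have hq_eq : q = shf p d1 := (Fin.ext (shf_repr p q)).symm
  have hd1lt : d1 < n := Nat.mod_lt _ hn
  have hd1pos : 0 < d1 := by
    rcases Nat.eq_zero_or_pos d1 with h0 | h
    · exfalso; apply hpq; rw [hq_eq, h0, shf_zero]
    · exact h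
  set g := Nat.gcd d1 n with hgdef
  have hgpos : 0 < g := Nat.gcd_pos_of_pos_left _ hd1pos
  have hglt : g < n :=
    lt_of_le_of_lt (Nat.le_of_dvd hd1pos (Nat.gcd_dvd_left _ _)) hd1lt
  have h2g : 2 * g ≤ n := by
    obtain ⟨c, hc⟩ := Nat.gcd_dvd_right d1 n
    have hc2 : 2 ≤ c := by
      by_contra h
      push_neg at h
      interval_cases c <;> omega
    calc 2 * g = g * 2 := by ring
      _ ≤ g * c := Nat.mul_le_mul_left g hc2
      _ = n := hc.symm
  -- the value of the pair distance transfers to gcd with d1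
  have hpv : p.val ≠ q.val := fun h => hpq (Fin.ext h)
  have hd2 : (p.val + n - q.val) % n = n - d1 := by
    rcases lt_or_gt_of_ne hpv with h | h
    · have e1 : d1 = q.val - p.val := by
        rw [hd1def]
        have e : q.val + n - p.val = (q.val - p.val) + n := by omega
        rw [e, Nat.add_mod_right, Nat.mod_eq_of_lt (by omega)]
      have e2 : p.val + n - q.val = n - (q.val - p.val) := by omega
      rw [e2, Nat.mod_eq_of_lt (by omega), e1]
    · have e1 : d1 = n - (p.val - q.val) := by
        rw [hd1def]
        have e : q.val + n - p.val = n - (p.val - q.val) := by omega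
        rw [e]
        exact Nat.mod_eq_of_lt (by omega)
      have e2 : p.val + n - q.val = (p.val - q.val) + n := by omega
      rw [e2, Nat.add_mod_right, e1,
        Nat.mod_eq_of_lt (show p.val - q.val < n by omega)]
      omega
  have hkg : k = g := by
    rw [← hk, relDist_eq ha p q, ← hd1def, hd2]
    rcases le_total d1 (n - d1) with h | h
    · rw [min_eq_left h]
    · rw [min_eq_right h, Nat.gcd_self_sub_left hd1lt.le]
  -- key closure fact
  have key : ∀ σ : Fin n → Fin n → Prop, IsCongruence δ σ → σ p q →
      ∀ m : ℕ, g ∣ m % n → σ p (shf p m) := by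
    intro σ hσ hσpq
    have hshift : ∀ (x y : Fin n) (m : ℕ), σ x y → σ (shf x m) (shf y m) := by
      intro x y m h
      have := hσ.2 x y (List.replicate m a) h
      rwa [wordAct_replicate ha, wordAct_replicate ha] at this
    have hbase : σ p (shf p d1) := hq_eq ▸ hσpq
    have hiter : ∀ j : ℕ, σ p (shf p (j * d1)) := by
      intro j
      induction j with
      | zero => rw [Nat.zero_mul, shf_zero]; exact hσ.1.refl p
      | succ j ihj =>
        have step := hshift p (shf p d1) (j * d1) hbase
        rw [shf_shf] at step
        have e : d1 + j * d1 = (j + 1) * d1 := by ring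
        rw [e] at step
        exact hσ.1.trans ihj step
    -- g itself is reachable
    have hg_mem : σ p (shf p g) := by
      obtain ⟨j, -, hj⟩ := Nat.exists_mul_mod_eq_gcd (k := n) (n := d1) (by rw [← hgdef]; exact hglt)
      have h1 := hiter j
      have h2 : shf p (j * d1) = shf p g := by
        apply shf_eq_of_mod
        rw [Nat.mul_comm, hj, ← hgdef, Nat.mod_eq_of_lt hglt]
      rwa [h2] at h1
    -- all multiples of g
    have hmul : ∀ i : ℕ, σ p (shf p (i * g)) := by
      intro i
      induction i with
      | zero => rw [Nat.zero_mul, shf_zero]; exact hσ.1.refl p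
      | succ i ihi =>
        have step := hshift p (shf p g) (i * g) hg_mem
        rw [shf_shf] at step
        have e : g + i * g = (i + 1) * g := by ring
        rw [e] at step
        exact hσ.1.trans ihi step
    intro m hm
    obtain ⟨i, hi⟩ := hm
    have h1 := hmul i
    have h2 : shf p (i * g) = shf p m := by
      apply shf_eq_of_mod
      rw [Nat.mul_comm, ← hi, Nat.mod_mod_of_dvd _ dvd_rfl]
    rwa [h2] at h1
  -- distance of the canonical pair
  have hdist_g : relDist δ a p (shf p g) = g := by
    rw [relDist_eq ha]
    have hsv : (shf p g).val = (p.val + g) % n := rfl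
    have hA : ((shf p g).val + n - p.val) % n = g := by
      rw [hsv]
      rcases Nat.lt_or_ge (p.val + g) n with h | h
      · rw [Nat.mod_eq_of_lt h]
        have e : p.val + g + n - p.val = g + n := by omega
        rw [e, Nat.add_mod_right, Nat.mod_eq_of_lt hglt]
      · rw [Nat.mod_eq_sub_mod h,
          Nat.mod_eq_of_lt (show p.val + g - n < n by omega)]
        have e : p.val + g - n + n - p.val = g := by omega
        rw [e, Nat.mod_eq_of_lt hglt]
    have hB : (p.val + n - (shf p g).val) % n = n - g := by
      rw [hsv]
      rcases Nat.lt_or_ge (p.val + g) n with h | h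
      · rw [Nat.mod_eq_of_lt h]
        have e : p.val + n - (p.val + g) = n - g := by omega
        rw [e, Nat.mod_eq_of_lt (by omega)]
      · rw [Nat.mod_eq_sub_mod h,
          Nat.mod_eq_of_lt (show p.val + g - n < n by omega)]
        have e : p.val + n - (p.val + g - n) = (n - g) + n := by omega
        rw [e, Nat.add_mod_right, Nat.mod_eq_of_lt (by omega)]
    rw [hA, hB, min_eq_left (by omega)]
  have part1 : ∃ p₁ q₁ : Fin n, genCong δ p q p₁ q₁ ∧ relDist δ a p₁ q₁ = k := by
    refine ⟨p, shf p g, ?_, by rw [hdist_g, hkg]⟩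
    intro σ hσ hσpq
    exact key σ hσ hσpq g ⟨1, by rw [Nat.mod_eq_of_lt hglt, Nat.mul_one]⟩
  refine ⟨part1, fun hk1 => ⟨by rw [← hk1]; exact part1, ?_⟩⟩
  -- k = 1 case: universality
  have hg1 : g = 1 := by omega
  intro x y σ hσ hσpq
  have hall : ∀ z : Fin n, σ p z := by
    intro z
    have h1 := key σ hσ hσpq ((z.val + n - p.val) % n) (by rw [hg1]; exact one_dvd _)
    have h2 : shf p ((z.val + n - p.val) % n) = z := Fin.ext (shf_repr p z)
    rwa [h2] at h1
  exact hσ.1.trans (hσ.1.symm (hall x)) (hall y)
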